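/- In a 2-crossed module, for all h₁, h₂ ∈ H: {h₁,h₂}ₚ⁻¹ = (h₁h₂h₁⁻¹) ▷' {h₁, h₂⁻¹}ₚ, where h ▷' l = l·{δ(l)⁻¹,h}ₚ. -/

import Mathlib

/-- A 2-crossed module `(L → H → G, ▷, {_,_}ₚ)`. -/
structure TwoCrossedModule (G H L : Type*) [Group G] [Group H] [Group L] where
  /-- the map `δ : L → H` -/
  dl : L →* H
  /-- the map `∂ : H → G` -/
  dh : H →* G
  /-- the action `▷` of `G` on `H` by automorphisms -/
  actH : G →* MulAut H
  /-- the action `▷` of `G` on `L` by automorphisms -/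
  actL : G →* MulAut L
  /-- the Peiffer lifting `{_,_}ₚ : H × H → L` -/
  pf : H → H → L
  comp_trivial : ∀ l : L, dh (dl l) = 1
  equiv_dh : ∀ (g : G) (h : H), dh (actH g h) = g * dh h * g⁻¹
  equiv_dl : ∀ (g : G) (l : L), dl (actL g l) = actH g (dl l)
  equiv_pf : ∀ (g : G) (h₁ h₂ : H), actL g (pf h₁ h₂) = pf (actH g h₁) (actH g h₂)
  ax1 : ∀ h₁ h₂ : H, dl (pf h₁ h₂) = h₁ * h₂ * h₁⁻¹ * actH (dh h₁) h₂⁻¹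
  ax2 : ∀ l₁ l₂ : L, l₁ * l₂ * l₁⁻¹ * l₂⁻¹ = pf (dl l₁) (dl l₂)
  ax3 : ∀ h₁ h₂ h₃ : H,
    pf (h₁ * h₂) h₃ = pf h₁ (h₂ * h₃ * h₂⁻¹) * actL (dh h₁) (pf h₂ h₃)
  ax4 : ∀ h₁ h₂ h₃ : H, pf h₁ (h₂ * h₃) =
    pf h₁ h₂ * pf h₁ h₃ * pf ((h₁ * h₃ * h₁⁻¹ * actH (dh h₁) h₃⁻¹)⁻¹) (actH (dh h₁) h₂)
  ax5 : ∀ (h : H) (l : L), pf (dl l) h * pf h (dl l) = l * actL (dh h) l⁻¹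

/-- The induced action `h ▷' l = l · {δ(l)⁻¹, h}ₚ` of `H` on `L`. -/
def TwoCrossedModule.ap {G H L : Type*} [Group G] [Group H] [Group L]
    (T : TwoCrossedModule G H L) (h : H) (l : L) : L :=
  l * T.pf (T.dl l)⁻¹ h


namespace TwoCrossedModule

variable {G H L : Type*} [Group G] [Group H] [Group L] (T : TwoCrossedModule G H L)

lemma pf_one_left (x : H) : T.pf 1 x = 1 := by
  have h := T.ax3 1 1 x
  simp only [one_mul, mul_one, inv_one, map_one, MulAut.one_apply] at h
  exact (left_eq_mul.mp h)

lemma pf_one_right (x : H) : T.pf x 1 = 1 := by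
  have h := T.ax4 x 1 1
  simp only [one_mul, mul_one, inv_one, map_one, mul_inv_cancel, T.pf_one_left] at h
  exact (left_eq_mul.mp h)

lemma actH_dh_dl_inv (x : L) (y : H) : T.actH (T.dh ((T.dl x)⁻¹)) y = y := by
  rw [map_inv, T.comp_trivial, inv_one, map_one, MulAut.one_apply]

end TwoCrossedModule

theorem pf_inv_eq_ap_conj {G H L : Type*} [Group G] [Group H] [Group L]
    (T : TwoCrossedModule G H L) (h₁ h₂ : H) :
    (T.pf h₁ h₂)⁻¹ = T.ap (h₁ * h₂ * h₁⁻¹) (T.pf h₁ h₂⁻¹) := by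
  set l := T.pf h₁ h₂⁻¹ with hl
  set m := T.pf h₁ h₂ with hm
  set a := T.actH (T.dh h₁) h₂ with ha
  -- key fact: {δ(l)⁻¹, a} = l⁻¹ m⁻¹
  have fa : T.pf ((T.dl l)⁻¹) a = l⁻¹ * m⁻¹ := by
    have h4 := T.ax4 h₁ h₂ h₂⁻¹
    rw [mul_inv_cancel, T.pf_one_right, ← T.ax1 h₁ h₂⁻¹] at h4
    rw [eq_inv_of_mul_eq_one_right h4.symm, mul_inv_rev]
  -- h₁ h₂ h₁⁻¹ = δ(m) a
  have hconj : h₁ * h₂ * h₁⁻¹ = T.dl m * a := by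
    rw [T.ax1 h₁ h₂, map_inv, ha]
    group
  -- commutator identity: δ(l)⁻¹ a δ(l) a⁻¹ = δ(l⁻¹ m⁻¹)
  have hc : (T.dl l)⁻¹ * a * ((T.dl l)⁻¹)⁻¹ * a⁻¹ = T.dl (l⁻¹ * m⁻¹) := by
    have h1 := T.ax1 ((T.dl l)⁻¹) a
    rw [T.actH_dh_dl_inv, fa] at h1
    exact h1.symm
  -- two Peiffer pairings of δ-images
  have p1 : T.pf ((T.dl l)⁻¹) (T.dl m) = l⁻¹ * m * l * m⁻¹ := by
    rw [← map_inv, ← T.ax2]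
    group
  have p3 : T.pf ((T.dl (l⁻¹ * m⁻¹))⁻¹) (T.dl m) =
      (l⁻¹ * m⁻¹)⁻¹ * m * (l⁻¹ * m⁻¹) * m⁻¹ := by
    rw [← map_inv, ← T.ax2]
    group
  -- expand the goal
  show m⁻¹ = T.ap (h₁ * h₂ * h₁⁻¹) l
  rw [TwoCrossedModule.ap, hconj]
  have h4 := T.ax4 ((T.dl l)⁻¹) (T.dl m) a
  rw [T.actH_dh_dl_inv, T.actH_dh_dl_inv, hc] at h4
  rw [h4, p1, p3, fa]
  group
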